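/- Fix Θ₁, Θ₂, Θ₃ ∈ [0, π) with Θ₁ + Θ₂ + Θ₃ < π, fix distinct i, j ∈ {1,2,3} with {k} = {1,2,3} \ {i,j}, and fix a positive number c. Then ϑᵢ(r₁, r₂, r₃) + ϑⱼ(r₁, r₂, r₃) → π as (rᵢ, rⱼ, rₖ) → (0, 0, c) with all coordinates staying positive. -/

import Mathlib

/-- The inverse hyperbolic cosine: `arcosh x = log (x + √(x² − 1))` for `x ≥ 1`. -/
noncomputable def arcosh (x : ℝ) : ℝ := Real.log (x + Real.sqrt (x ^ 2 - 1))

/-- The hyperbolic distance `dₖ` between the centers of two hyperbolic disks of radii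
`r (k+1)`, `r (k+2)` meeting at exterior intersection angle `Θ k` (hyperbolic cosine law). -/
noncomputable def dist3 (Θ r : Fin 3 → ℝ) (k : Fin 3) : ℝ :=
  arcosh (Real.cosh (r (k + 1)) * Real.cosh (r (k + 2)) +
    Real.cos (Θ k) * Real.sinh (r (k + 1)) * Real.sinh (r (k + 2)))

/-- The inner angle `ϑᵢ` at the `i`-th vertex of the hyperbolic triangle of centers of a
three-circle configuration, by the hyperbolic law of cosines. -/
noncomputable def theta3 (Θ r : Fin 3 → ℝ) (i : Fin 3) : ℝ :=
  Real.arccos ((Real.cosh (dist3 Θ r (i + 1)) * Real.cosh (dist3 Θ r (i + 2)) -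
      Real.cosh (dist3 Θ r i)) /
    (Real.sinh (dist3 Θ r (i + 1)) * Real.sinh (dist3 Θ r (i + 2))))

lemma cosh_arcosh {x : ℝ} (hx : 1 ≤ x) : Real.cosh (arcosh x) = x := by
  have h1 : (0:ℝ) ≤ x ^ 2 - 1 := by nlinarith
  have hs : Real.sqrt (x ^ 2 - 1) ^ 2 = x ^ 2 - 1 := Real.sq_sqrt h1
  have hs0 : 0 ≤ Real.sqrt (x ^ 2 - 1) := Real.sqrt_nonneg _
  have hy : 0 < x + Real.sqrt (x ^ 2 - 1) := by nlinarith
  rw [arcosh, Real.cosh_eq, Real.exp_log hy, Real.exp_neg, Real.exp_log hy]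
  field_simp
  nlinarith [hs]

lemma sinh_arcosh {x : ℝ} (hx : 1 ≤ x) : Real.sinh (arcosh x) = Real.sqrt (x ^ 2 - 1) := by
  have h1 : (0:ℝ) ≤ x ^ 2 - 1 := by nlinarith
  have hs : Real.sqrt (x ^ 2 - 1) ^ 2 = x ^ 2 - 1 := Real.sq_sqrt h1
  have hs0 : 0 ≤ Real.sqrt (x ^ 2 - 1) := Real.sqrt_nonneg _
  have hy : 0 < x + Real.sqrt (x ^ 2 - 1) := by nlinarith
  rw [arcosh, Real.sinh_eq, Real.exp_log hy, Real.exp_neg, Real.exp_log hy]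
  field_simp
  nlinarith [hs]

lemma uc_arcsin : UniformContinuous Real.arcsin := by
  have hcs : CompactSpace (Set.Icc (-1:ℝ) 1) := isCompact_iff_compactSpace.mp isCompact_Icc
  have h1 : UniformContinuous (Subtype.val ∘ (Real.sinOrderIso.symm : Set.Icc (-1:ℝ) 1 → Set.Icc (-(Real.pi/2)) (Real.pi/2))) :=
    CompactSpace.uniformContinuous_of_continuous
      (continuous_subtype_val.comp Real.sinOrderIso.symm.continuous)
  have h2 : UniformContinuous (Set.projIcc (-1:ℝ) 1 (neg_le_self zero_le_one)) :=
    (LipschitzWith.projIcc _).uniformContinuous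
  exact h1.comp h2

lemma uc_arccos : UniformContinuous Real.arccos :=
  uniformContinuous_const.sub uc_arcsin

open Filter Topology Uniformity in
lemma arccos_add_arccos_tendsto_pi {α : Type*} {l : Filter α} {f g : α → ℝ}
    (h : Tendsto (fun x => f x + g x) l (𝓝 0)) :
    Tendsto (fun x => Real.arccos (f x) + Real.arccos (g x)) l (𝓝 Real.pi) := by
  have h0 : Tendsto (fun x => (g x, -(f x))) l (𝓤 ℝ) :=
    tendsto_uniformity_iff_dist_tendsto_zero.2
      (by simpa [Real.dist_eq, sub_neg_eq_add, add_comm] using h.abs)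
  have h2 := Filter.Tendsto.comp uc_arccos h0
  have hdist : Tendsto (fun x => dist (Real.arccos (g x)) (Real.arccos (-(f x)))) l (𝓝 0) := by
    have := tendsto_uniformity_iff_dist_tendsto_zero.1 h2
    simpa [Function.comp] using this
  have hsub : Tendsto (fun x => Real.arccos (g x) - Real.arccos (-(f x))) l (𝓝 0) := by
    apply squeeze_zero_norm (fun x => ?_) hdist
    rw [Real.norm_eq_abs, Real.dist_eq]
  have : Tendsto (fun x => Real.pi + (Real.arccos (g x) - Real.arccos (-(f x)))) l
      (𝓝 (Real.pi + 0)) := tendsto_const_nhds.add hsub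
  rw [add_zero] at this
  refine this.congr fun x => ?_
  rw [Real.arccos_neg]
  ring

lemma sinh_le_mul_cosh {x : ℝ} (hx : 0 ≤ x) : Real.sinh x ≤ x * Real.cosh x := by
  have mono : MonotoneOn (fun y => y * Real.cosh y - Real.sinh y) (Set.Ici 0) := by
    have hd : ∀ y : ℝ, HasDerivAt (fun y => y * Real.cosh y - Real.sinh y)
        (y * Real.sinh y) y := by
      intro y
      have h1 := ((hasDerivAt_id y).mul (Real.hasDerivAt_cosh y)).sub (Real.hasDerivAt_sinh y)
      refine h1.congr_deriv ?_
      simp only [id_eq]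
      ring
    apply monotoneOn_of_deriv_nonneg (convex_Ici 0)
      (Continuous.continuousOn (by continuity))
      (fun y _ => (hd y).differentiableAt.differentiableWithinAt)
    intro y hy
    rw [interior_Ici] at hy
    rw [(hd y).deriv]
    exact mul_nonneg hy.le (Real.sinh_nonneg_iff.2 hy.le)
  have h0 : (0:ℝ) ∈ Set.Ici (0:ℝ) := Set.self_mem_Ici
  have := mono h0 hx hx
  simpa using this

lemma lower_aux {t : ℝ} (x y : ℝ) (ht1 : -1 ≤ t) (ht2 : t ≤ 1) :
    (1+t)/2 * (Real.cosh (x+y) - 1) + 1 ≤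
      Real.cosh x * Real.cosh y + t * Real.sinh x * Real.sinh y := by
  nlinarith [Real.cosh_add x y, Real.cosh_sub x y, Real.one_le_cosh (x-y)]

lemma cosh_quad {s : ℝ} (hs : 0 ≤ s) : 1 + s^2/2 ≤ Real.cosh s := by
  have h : Real.cosh (2*(s/2)) = Real.cosh (s/2)^2 + Real.sinh (s/2)^2 := Real.cosh_two_mul _
  have h2 : Real.cosh (s/2)^2 = Real.sinh (s/2)^2 + 1 := Real.cosh_sq _
  have h3 : s/2 ≤ Real.sinh (s/2) := Real.self_le_sinh_iff.2 (by linarith)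
  have h4 : 2*(s/2) = s := by ring
  rw [h4] at h
  nlinarith [h3]

lemma cosh_sub_one_le {s : ℝ} (hs : 0 ≤ s) :
    Real.cosh s - 1 ≤ s^2/2 * Real.cosh (s/2)^2 := by
  have h : Real.cosh (2*(s/2)) = Real.cosh (s/2)^2 + Real.sinh (s/2)^2 := Real.cosh_two_mul _
  have h2 : Real.cosh (s/2)^2 = Real.sinh (s/2)^2 + 1 := Real.cosh_sq _
  have h3 : Real.sinh (s/2) ≤ s/2 * Real.cosh (s/2) := sinh_le_mul_cosh (by linarith)
  have h5 : 0 ≤ Real.sinh (s/2) := Real.sinh_nonneg_iff.2 (by linarith)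
  have h4 : 2*(s/2) = s := by ring
  rw [h4] at h
  nlinarith [h3, h5]

noncomputable def Cfun (Θ r : Fin 3 → ℝ) (m : Fin 3) : ℝ :=
  Real.cosh (r (m + 1)) * Real.cosh (r (m + 2)) +
    Real.cos (Θ m) * Real.sinh (r (m + 1)) * Real.sinh (r (m + 2))

lemma continuous_Cfun (Θ : Fin 3 → ℝ) (m : Fin 3) :
    Continuous (fun r : Fin 3 → ℝ => Cfun Θ r m) := by
  unfold Cfun; fun_prop

lemma one_lt_Cfun {Θ r : Fin 3 → ℝ} (hΘ : ∀ τ, -1 < Real.cos (Θ τ) ∧ Real.cos (Θ τ) ≤ 1)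
    (hr : ∀ τ, 0 < r τ) (m : Fin 3) : 1 < Cfun Θ r m := by
  have h := lower_aux (t := Real.cos (Θ m)) (r (m+1)) (r (m+2)) (hΘ m).1.le (hΘ m).2
  have hxy : 0 < r (m+1) + r (m+2) := by have := hr (m+1); have := hr (m+2); linarith
  have h2 := Real.one_lt_cosh.2 hxy.ne'
  unfold Cfun
  nlinarith [(hΘ m).1]

lemma cosh_dist3 {Θ r : Fin 3 → ℝ} (hΘ : ∀ τ, -1 < Real.cos (Θ τ) ∧ Real.cos (Θ τ) ≤ 1)
    (hr : ∀ τ, 0 < r τ) (m : Fin 3) :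
    Real.cosh (dist3 Θ r m) = Cfun Θ r m :=
  cosh_arcosh (one_lt_Cfun hΘ hr m).le

lemma sinh_dist3 {Θ r : Fin 3 → ℝ} (hΘ : ∀ τ, -1 < Real.cos (Θ τ) ∧ Real.cos (Θ τ) ≤ 1)
    (hr : ∀ τ, 0 < r τ) (m : Fin 3) :
    Real.sinh (dist3 Θ r m) = Real.sqrt (Cfun Θ r m ^ 2 - 1) :=
  sinh_arcosh (one_lt_Cfun hΘ hr m).le

lemma theta3_eq {Θ r : Fin 3 → ℝ} (hΘ : ∀ τ, -1 < Real.cos (Θ τ) ∧ Real.cos (Θ τ) ≤ 1)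
    (hr : ∀ τ, 0 < r τ) (m : Fin 3) :
    theta3 Θ r m = Real.arccos ((Cfun Θ r (m+1) * Cfun Θ r (m+2) - Cfun Θ r m) /
      (Real.sqrt (Cfun Θ r (m+1) ^ 2 - 1) * Real.sqrt (Cfun Θ r (m+2) ^ 2 - 1))) := by
  rw [theta3, cosh_dist3 hΘ hr, cosh_dist3 hΘ hr, cosh_dist3 hΘ hr,
    sinh_dist3 hΘ hr, sinh_dist3 hΘ hr]

set_option maxHeartbeats 1000000 in
open Filter Topology in
lemma core3 (Θ : Fin 3 → ℝ) (hΘ : ∀ τ, Θ τ ∈ Set.Ico 0 Real.pi)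
    (i : Fin 3) (c : ℝ) (hc : 0 < c) :
    Tendsto (fun r : Fin 3 → ℝ => theta3 Θ r i + theta3 Θ r (i+1))
      (𝓝[{r : Fin 3 → ℝ | ∀ τ, 0 < r τ}] (fun τ => if τ = i+2 then c else 0))
      (𝓝 Real.pi) := by
  have idx : ∀ m : Fin 3, m+1+1 = m+2 ∧ m+1+2 = m ∧ m+2+1 = m ∧ m+2+2 = m+1
      ∧ m ≠ m+2 ∧ m+1 ≠ m+2 := by decide
  obtain ⟨e1, e2, e3, e4, ne1, ne2⟩ := idx i
  have hcos : ∀ τ, -1 < Real.cos (Θ τ) ∧ Real.cos (Θ τ) ≤ 1 := fun τ =>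
    ⟨by simpa [Real.cos_pi] using
        Real.cos_lt_cos_of_nonneg_of_le_pi (hΘ τ).1 le_rfl (hΘ τ).2,
      Real.cos_le_one _⟩
  set r₀ : Fin 3 → ℝ := fun τ => if τ = i+2 then c else 0 with hr₀def
  set S : Set (Fin 3 → ℝ) := {r | ∀ τ, 0 < r τ} with hSdef
  set l := 𝓝[S] r₀ with hldef
  have hr₀i : r₀ i = 0 := if_neg ne1
  have hr₀j : r₀ (i+1) = 0 := if_neg ne2
  have hr₀k : r₀ (i+2) = c := if_pos rfl
  set A : (Fin 3 → ℝ) → ℝ := fun r => Cfun Θ r i with hAdef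
  set B : (Fin 3 → ℝ) → ℝ := fun r => Cfun Θ r (i+1) with hBdef
  set D : (Fin 3 → ℝ) → ℝ := fun r => Cfun Θ r (i+2) with hDdef
  set SA : (Fin 3 → ℝ) → ℝ := fun r => Real.sqrt (A r ^ 2 - 1) with hSAdef
  set SB : (Fin 3 → ℝ) → ℝ := fun r => Real.sqrt (B r ^ 2 - 1) with hSBdef
  set SD : (Fin 3 → ℝ) → ℝ := fun r => Real.sqrt (D r ^ 2 - 1) with hSDdef
  have hmemS : ∀ᶠ r in l, r ∈ S := eventually_mem_nhdsWithin
  have hcoord : ∀ m : Fin 3, Tendsto (fun r : Fin 3 → ℝ => r m) l (𝓝 (r₀ m)) :=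
    fun m => ((continuous_apply m).tendsto r₀).mono_left nhdsWithin_le_nhds
  -- limits of A, B, D
  have hAt : Tendsto A l (𝓝 (Real.cosh c)) := by
    have h : Tendsto A l (𝓝 (A r₀)) :=
      (((continuous_Cfun Θ i)).tendsto r₀).mono_left nhdsWithin_le_nhds
    simpa [hAdef, Cfun, hr₀i, hr₀j, hr₀k, e1, e2, e3, e4] using h
  have hBt : Tendsto B l (𝓝 (Real.cosh c)) := by
    have h : Tendsto B l (𝓝 (B r₀)) :=
      (((continuous_Cfun Θ (i+1))).tendsto r₀).mono_left nhdsWithin_le_nhds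
    simpa [hBdef, Cfun, hr₀i, hr₀j, hr₀k, e1, e2, e3, e4] using h
  have hDt : Tendsto D l (𝓝 1) := by
    have h : Tendsto D l (𝓝 (D r₀)) :=
      (((continuous_Cfun Θ (i+2))).tendsto r₀).mono_left nhdsWithin_le_nhds
    simpa [hDdef, Cfun, hr₀i, hr₀j, hr₀k, e1, e2, e3, e4] using h
  set γ : ℝ := Real.cosh c with hγdef
  have hγ : 1 < γ := Real.one_lt_cosh.2 hc.ne'
  set σ : ℝ := Real.sqrt (γ^2 - 1) with hσdef
  have hσ2 : σ^2 = γ^2 - 1 := Real.sq_sqrt (by nlinarith)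
  have hσ : 0 < σ := Real.sqrt_pos.2 (by nlinarith)
  have hSAt : Tendsto SA l (𝓝 σ) := ((hAt.pow 2).sub tendsto_const_nhds).sqrt
  have hSBt : Tendsto SB l (𝓝 σ) := ((hBt.pow 2).sub tendsto_const_nhds).sqrt
  have hSDt : Tendsto SD l (𝓝 0) := by
    have h : Tendsto SD l (𝓝 (Real.sqrt ((1:ℝ)^2 - 1))) :=
      ((hDt.pow 2).sub tendsto_const_nhds).sqrt
    simpa using h
  -- pointwise positivity facts
  have hA1 : ∀ r ∈ S, 1 < A r := fun r hr => one_lt_Cfun hcos hr i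
  have hB1 : ∀ r ∈ S, 1 < B r := fun r hr => one_lt_Cfun hcos hr (i+1)
  have hD1 : ∀ r ∈ S, 1 < D r := fun r hr => one_lt_Cfun hcos hr (i+2)
  have hSA2 : ∀ r ∈ S, SA r^2 = A r^2 - 1 ∧ 0 < SA r := fun r hr =>
    ⟨Real.sq_sqrt (by nlinarith [hA1 r hr]), Real.sqrt_pos.2 (by nlinarith [hA1 r hr])⟩
  have hSB2 : ∀ r ∈ S, SB r^2 = B r^2 - 1 ∧ 0 < SB r := fun r hr =>
    ⟨Real.sq_sqrt (by nlinarith [hB1 r hr]), Real.sqrt_pos.2 (by nlinarith [hB1 r hr])⟩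
  have hSD2 : ∀ r ∈ S, SD r^2 = D r^2 - 1 ∧ 0 < SD r := fun r hr =>
    ⟨Real.sq_sqrt (by nlinarith [hD1 r hr]), Real.sqrt_pos.2 (by nlinarith [hD1 r hr])⟩
  -- component limits
  have hF : Tendsto (fun r => (SA r * B r + SB r * A r)/(SA r * SB r)) l
      (𝓝 ((σ*γ + σ*γ)/(σ*σ))) :=
    ((hSAt.mul hBt).add (hSBt.mul hAt)).div (hSAt.mul hSBt) (by positivity)
  have hT1 : Tendsto (fun r => (D r - 1)/SD r) l (𝓝 0) := by
    have base : Tendsto (fun r => SD r / (D r + 1)) l (𝓝 (0/(1+1))) :=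
      hSDt.div (hDt.add tendsto_const_nhds) (by norm_num)
    norm_num at base
    refine Filter.Tendsto.congr' ?_ base
    filter_upwards [hmemS] with r hr
    have h1 := hD1 r hr
    obtain ⟨hsd2, hsd⟩ := hSD2 r hr
    rw [div_eq_div_iff (by linarith : D r + 1 ≠ 0) hsd.ne']
    linear_combination hsd2
  -- the squeeze for (A-B)^2/SD
  set e₀ : ℝ := Real.sqrt ((1 + Real.cos (Θ (i+2)))/2) with he₀def
  have he₀pos : 0 < e₀ := Real.sqrt_pos.2 (by nlinarith [(hcos (i+2)).1])
  have he₀2 : e₀^2 = (1 + Real.cos (Θ (i+2)))/2 := Real.sq_sqrt (by nlinarith [(hcos (i+2)).1])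
  set V : (Fin 3 → ℝ) → ℝ := fun r =>
    Real.cosh (r (i+2)) * ((r i + r (i+1))/2 * Real.cosh ((r i + r (i+1))/2)^2) +
      Real.sinh (r (i+2)) * Real.cosh (r i + r (i+1)) with hVdef
  have hVt : Tendsto V l (𝓝 (Real.sinh c)) := by
    have hVc : Continuous V := by rw [hVdef]; fun_prop
    have h : Tendsto V l (𝓝 (V r₀)) := (hVc.tendsto r₀).mono_left nhdsWithin_le_nhds
    simpa [hVdef, hr₀i, hr₀j, hr₀k] using h
  have hci : Tendsto (fun r : Fin 3 → ℝ => r i) l (𝓝 0) := hr₀i ▸ hcoord i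
  have hcj : Tendsto (fun r : Fin 3 → ℝ => r (i+1)) l (𝓝 0) := hr₀j ▸ hcoord (i+1)
  have hboundt : Tendsto (fun r => (r i + r (i+1)) * V r^2 / e₀) l (𝓝 0) := by
    have h : Tendsto (fun r => (r i + r (i+1)) * V r^2 / e₀) l
        (𝓝 ((0 + 0) * Real.sinh c^2 / e₀)) :=
      ((hci.add hcj).mul (hVt.pow 2)).div tendsto_const_nhds he₀pos.ne'
    simpa using h
  have coshmono : ∀ u v : ℝ, 0 ≤ u → u ≤ v → Real.cosh u ≤ Real.cosh v := fun u v hu huv =>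
    Real.cosh_le_cosh.2 (by rw [abs_of_nonneg hu, abs_of_nonneg (hu.trans huv)]; exact huv)
  have hg : Tendsto (fun r => (A r - B r)^2 / SD r) l (𝓝 0) := by
    refine squeeze_zero' (Filter.Eventually.of_forall fun r => by positivity) ?_ hboundt
    filter_upwards [hmemS] with r hr
    have px := hr i; have py := hr (i+1); have pz := hr (i+2)
    have hs : 0 < r i + r (i+1) := by linarith
    have hczp : (0:ℝ) < Real.cosh (r (i+2)) := Real.cosh_pos (r (i+2))
    have hszp : (0:ℝ) ≤ Real.sinh (r (i+2)) := Real.sinh_nonneg_iff.2 pz.le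
    have hsx : (0:ℝ) ≤ Real.sinh (r i) := Real.sinh_nonneg_iff.2 px.le
    have hsy : (0:ℝ) ≤ Real.sinh (r (i+1)) := Real.sinh_nonneg_iff.2 py.le
    have mcx : Real.cosh (r i) ≤ Real.cosh (r i + r (i+1)) := coshmono _ _ px.le (by linarith)
    have mcy : Real.cosh (r (i+1)) ≤ Real.cosh (r i + r (i+1)) := coshmono _ _ py.le (by linarith)
    have c1 : |Real.cosh (r (i+1)) - Real.cosh (r i)| ≤ Real.cosh (r i + r (i+1)) - 1 := by
      rw [abs_le]
      constructor
      · linarith [Real.one_le_cosh (r (i+1)), mcx]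
      · linarith [Real.one_le_cosh (r i), mcy]
    have c2 : |Real.cos (Θ i) * Real.sinh (r (i+1)) - Real.cos (Θ (i+1)) * Real.sinh (r i)| ≤
        Real.sinh (r (i+1)) + Real.sinh (r i) := by
      rw [abs_le]
      constructor
      all_goals
        have w1 := mul_le_mul_of_nonneg_right (hcos i).2 hsy
        have w2 := mul_le_mul_of_nonneg_right (hcos i).1.le hsy
        have w3 := mul_le_mul_of_nonneg_right (hcos (i+1)).2 hsx
        have w4 := mul_le_mul_of_nonneg_right (hcos (i+1)).1.le hsx
        linarith
    have habs : |A r - B r| ≤ Real.cosh (r (i+2)) * (Real.cosh (r i + r (i+1)) - 1) +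
        Real.sinh (r (i+2)) * (Real.sinh (r (i+1)) + Real.sinh (r i)) := by
      have hsplit : A r - B r = Real.cosh (r (i+2)) * (Real.cosh (r (i+1)) - Real.cosh (r i)) +
          Real.sinh (r (i+2)) * (Real.cos (Θ i) * Real.sinh (r (i+1)) -
            Real.cos (Θ (i+1)) * Real.sinh (r i)) := by
        simp only [hAdef, hBdef, Cfun, e1, e2]
        ring
      rw [hsplit]
      refine (abs_add_le _ _).trans ?_
      rw [abs_mul, abs_mul, abs_of_nonneg hczp.le, abs_of_nonneg hszp]
      exact add_le_add (mul_le_mul_of_nonneg_left c1 hczp.le)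
        (mul_le_mul_of_nonneg_left c2 hszp)
    have q1 : Real.cosh (r i + r (i+1)) - 1 ≤
        (r i + r (i+1)) * ((r i + r (i+1))/2 * Real.cosh ((r i + r (i+1))/2)^2) := by
      have := cosh_sub_one_le (s := r i + r (i+1)) hs.le
      nlinarith
    have q2 : Real.sinh (r (i+1)) + Real.sinh (r i) ≤
        (r i + r (i+1)) * Real.cosh (r i + r (i+1)) := by
      have u1 := sinh_le_mul_cosh px.le
      have u2 := sinh_le_mul_cosh py.le
      nlinarith [mul_le_mul_of_nonneg_left mcx px.le, mul_le_mul_of_nonneg_left mcy py.le]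
    have habd : |A r - B r| ≤ (r i + r (i+1)) * V r := by
      refine habs.trans ?_
      have w1 := mul_le_mul_of_nonneg_left q1 hczp.le
      have w2 := mul_le_mul_of_nonneg_left q2 hszp
      simp only [hVdef]
      nlinarith
    have hDlow := lower_aux (t := Real.cos (Θ (i+2))) (r i) (r (i+1))
      (hcos (i+2)).1.le (hcos (i+2)).2
    have hSDlow : e₀ * (r i + r (i+1)) ≤ SD r := by
      rw [hSDdef]
      apply Real.le_sqrt_of_sq_le
      have hq := cosh_quad (s := r i + r (i+1)) hs.le
      have hd1 := hD1 r hr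
      have hDCfun : Real.cosh (r i) * Real.cosh (r (i+1)) +
          Real.cos (Θ (i+2)) * Real.sinh (r i) * Real.sinh (r (i+1)) = D r := by
        simp only [hDdef, Cfun, e3, e4]
      rw [hDCfun] at hDlow
      nlinarith [he₀2, (hcos (i+2)).1]
    obtain ⟨_, hSDpos⟩ := hSD2 r hr
    have hVpos : 0 ≤ V r := by
      simp only [hVdef]
      have : (0:ℝ) < Real.cosh (r i + r (i+1)) := Real.cosh_pos _
      positivity
    calc (A r - B r)^2 / SD r ≤ ((r i + r (i+1)) * V r)^2 / (e₀ * (r i + r (i+1))) := by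
          apply div_le_div₀ (by positivity) ?_ (by positivity) hSDlow
          nlinarith [abs_nonneg (A r - B r), sq_abs (A r - B r)]
      _ = (r i + r (i+1)) * V r^2 / e₀ := by
          field_simp
  -- the W limit
  have hden : γ*γ - 1 + σ*σ ≠ 0 := by nlinarith
  have hWt : Tendsto (fun r => 1/(A r * B r - 1 + SA r * SB r)) l
      (𝓝 (1/(γ*γ - 1 + σ*σ))) :=
    tendsto_const_nhds.div (((hAt.mul hBt).sub tendsto_const_nhds).add
      (hSAt.mul hSBt)) hden
  have hcomb : Tendsto (fun r => (SA r * B r + SB r * A r)/(SA r * SB r) *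
      ((D r - 1)/SD r - (A r - B r)^2/SD r * (1/(A r * B r - 1 + SA r * SB r)))) l
      (𝓝 ((σ*γ + σ*γ)/(σ*σ) * (0 - 0 * (1/(γ*γ - 1 + σ*σ))))) :=
    hF.mul (hT1.sub (hg.mul hWt))
  have hcomb0 : Tendsto (fun r => (SA r * B r + SB r * A r)/(SA r * SB r) *
      ((D r - 1)/SD r - (A r - B r)^2/SD r * (1/(A r * B r - 1 + SA r * SB r)))) l
      (𝓝 0) := by simpa using hcomb
  -- identification with the sum of the two cosine expressions
  have husum : Tendsto (fun r => (B r * D r - A r)/(SB r * SD r) +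
      (D r * A r - B r)/(SD r * SA r)) l (𝓝 0) := by
    refine Filter.Tendsto.congr' ?_ hcomb0
    filter_upwards [hmemS] with r hr
    obtain ⟨ha2, ha0⟩ := hSA2 r hr
    obtain ⟨hb2, hb0⟩ := hSB2 r hr
    obtain ⟨hd2, hd0⟩ := hSD2 r hr
    have hA1' := hA1 r hr; have hB1' := hB1 r hr; have hD1' := hD1 r hr
    have hQpos : 0 < A r * B r - 1 + SA r * SB r := by nlinarith
    have e_1 : SA r * (B r * D r - A r) + SB r * (D r * A r - B r) =
        (SA r * B r + SB r * A r) * ((D r - 1) - (A r * B r - SA r * SB r - 1)) := by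
      linear_combination (-(SB r * B r)) * ha2 + (-(SA r * A r)) * hb2
    have e_2 : A r * B r - SA r * SB r - 1 = (A r - B r)^2 / (A r * B r - 1 + SA r * SB r) := by
      rw [eq_div_iff hQpos.ne']
      linear_combination (-(SB r^2)) * ha2 + (-(A r^2 - 1)) * hb2
    have step : (B r * D r - A r)/(SB r * SD r) + (D r * A r - B r)/(SD r * SA r) =
        (SA r * (B r * D r - A r) + SB r * (D r * A r - B r))/(SA r * SB r * SD r) := by
      field_simp
    rw [step, e_1, e_2]
    field_simp
  -- back to the angles
  have harc := arccos_add_arccos_tendsto_pi husum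
  refine Filter.Tendsto.congr' ?_ harc
  filter_upwards [hmemS] with r hr
  have t1 : theta3 Θ r i = Real.arccos ((B r * D r - A r)/(SB r * SD r)) := by
    rw [theta3_eq hcos hr i]
  have t2 : theta3 Θ r (i+1) = Real.arccos ((D r * A r - B r)/(SD r * SA r)) := by
    rw [theta3_eq hcos hr (i+1), e1, e2]
  rw [t1, t2]

open Filter Topology in
theorem three_circle_two_angles_tendsto_pi
    (Θ : Fin 3 → ℝ)
    (hΘ : ∀ τ, Θ τ ∈ Set.Ico 0 Real.pi)
    (hsum : Θ 0 + Θ 1 + Θ 2 < Real.pi)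
    (i j k : Fin 3) (hij : i ≠ j) (hik : i ≠ k) (hjk : j ≠ k)
    (c : ℝ) (hc : 0 < c) :
    Tendsto (fun r : Fin 3 → ℝ => theta3 Θ r i + theta3 Θ r j)
      (𝓝[{r : Fin 3 → ℝ | ∀ τ, 0 < r τ}] (fun τ => if τ = k then c else 0))
      (𝓝 Real.pi) := by
  have tri : ∀ i j k : Fin 3, i ≠ j → i ≠ k → j ≠ k →
      (j = i+1 ∧ k = i+2) ∨ (i = j+1 ∧ k = j+2) := by decide
  rcases tri i j k hij hik hjk with ⟨hj, hk⟩ | ⟨hi, hk⟩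
  · subst hj; subst hk
    exact core3 Θ hΘ i c hc
  · subst hi; subst hk
    exact Filter.Tendsto.congr (fun r => add_comm _ _) (core3 Θ hΘ j c hc)
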